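/- A set X ⊆ 2^ω is a σ-set (every relatively G_δ subset of X is relatively F_σ in X) if and only if X is an 'almost Q-set', i.e., for every W ⊆ 2^{<ω}, the set {x ∈ X : x↾n ∈ W for infinitely many n} is an F_σ subset of X. -/
import Mathlib

open Set Topology

/-- The length-n initial segment of x : ℕ → Bool as a finite binary sequence. -/
def res (x : ℕ → Bool) (n : ℕ) : List Bool := (List.range n).map x

/-- The branch a_x = {x↾n : n ∈ ω} ⊆ 2^{<ω}. -/
def branch (x : ℕ → Bool) : Set (List Bool) := Set.range (res x)

/-- Y is a relative G_δ subset of X. -/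
def IsRelGdelta {α : Type*} [TopologicalSpace α] (X Y : Set α) : Prop :=
  ∃ U : ℕ → Set α, (∀ n, IsOpen (U n)) ∧ Y = X ∩ ⋂ n, U n

/-- Y is a relative F_σ subset of X. -/
def IsRelFsigma {α : Type*} [TopologicalSpace α] (X Y : Set α) : Prop :=
  ∃ C : ℕ → Set α, (∀ n, IsClosed (C n)) ∧ Y = X ∩ ⋃ n, C n

/-- Z is a weak λ-set. -/
def IsWeakLambda {α : Type*} [TopologicalSpace α] (Z : Set α) : Prop :=
  ∀ Y W : Set α, Y ⊆ Z → W ⊆ Z → Y.Countable → W.Countable → Disjoint Y W →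
    ∃ H ⊆ Z, IsRelGdelta Z H ∧ IsRelFsigma Z H ∧ Y ⊆ H ∧ W ⊆ Z \ H

/-- S is an F_σ subset of the whole space. -/
def IsFsigma {α : Type*} [TopologicalSpace α] (S : Set α) : Prop :=
  ∃ C : ℕ → Set α, (∀ n, IsClosed (C n)) ∧ S = ⋃ n, C n

/-! ### Auxiliary lemmas about `res` and cylinders -/

lemma length_res (x : ℕ → Bool) (n : ℕ) : (res x n).length = n := by
  simp [res]

lemma res_eq_iff {x y : ℕ → Bool} {n : ℕ} :
    res x n = res y n ↔ ∀ i < n, x i = y i := by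
  simp [res, List.map_inj_left]

lemma take_res {x : ℕ → Bool} {m n : ℕ} (h : m ≤ n) : (res x n).take m = res x m := by
  simp [res, ← List.map_take, List.take_range, Nat.min_eq_left h]

/-- the cylinder of x at level n -/
def cylS (x : ℕ → Bool) (n : ℕ) : Set (ℕ → Bool) := {y | res y n = res x n}

lemma cylS_antitone {x : ℕ → Bool} {m n : ℕ} (h : m ≤ n) : cylS x n ⊆ cylS x m := by
  intro y hy
  have : (res y n).take m = (res x n).take m := by rw [hy]
  rwa [take_res h, take_res h] at this

lemma cylS_mem_nhds (x : ℕ → Bool) (n : ℕ) : cylS x n ∈ 𝓝 x := by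
  have heq : cylS x n = ⋂ i ∈ Finset.range n, (fun y : ℕ → Bool => y i) ⁻¹' {x i} := by
    ext y
    simp [cylS, res_eq_iff]
  rw [heq]
  refine IsOpen.mem_nhds ?_ ?_
  · exact isOpen_biInter_finset fun i _ =>
      (isOpen_discrete _).preimage (continuous_apply i)
  · simp

lemma exists_cylS_subset {V : Set (ℕ → Bool)} (hV : IsOpen V) {x : ℕ → Bool} (hx : x ∈ V) :
    ∃ n, cylS x n ⊆ V := by
  rcases isOpen_pi_iff.mp hV x hx with ⟨I, u, hu, hsub⟩
  refine ⟨I.sup id + 1, fun y hy => hsub ?_⟩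
  intro i hi
  have hlt : i < I.sup id + 1 := Nat.lt_succ_of_le (Finset.le_sup (f := id) hi)
  have : y i = x i := res_eq_iff.mp hy i hlt
  rw [this]
  exact (hu i hi).2

/-- The set {y | res y m ∈ W} is open. -/
lemma isOpen_res_mem (W : Set (List Bool)) (m : ℕ) : IsOpen {y : ℕ → Bool | res y m ∈ W} := by
  rw [isOpen_iff_mem_nhds]
  intro x hx
  refine Filter.mem_of_superset (cylS_mem_nhds x m) fun y hy => ?_
  show res y m ∈ W
  rw [show res y m = res x m from hy]
  exact hx

/-! ### The counting function for the reverse direction -/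

/-- `Fc V n x` counts the number of `m < n` such that the cylinder of `x` at level `m`
is contained in `V (Fc V m x)` (the "entry times"). -/
noncomputable def Fc (V : ℕ → Set (ℕ → Bool)) : ℕ → (ℕ → Bool) → ℕ
  | 0, _ => 0
  | n + 1, x =>
    Fc V n x + @ite _ (cylS x n ⊆ V (Fc V n x)) (Classical.propDecidable _) 1 0

/-- `Pc V n x` says that `n` is an entry time for `x`. -/
def Pc (V : ℕ → Set (ℕ → Bool)) (n : ℕ) (x : ℕ → Bool) : Prop :=
  cylS x n ⊆ V (Fc V n x)

lemma Fc_succ (V : ℕ → Set (ℕ → Bool)) (n : ℕ) (x : ℕ → Bool) :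
    Fc V (n + 1) x
      = Fc V n x + @ite _ (Pc V n x) (Classical.propDecidable _) 1 0 := rfl

lemma Fc_congr (V : ℕ → Set (ℕ → Bool)) {x y : ℕ → Bool} :
    ∀ n, res x n = res y n → Fc V n x = Fc V n y := by
  intro n
  induction n with
  | zero => intro _; simp [Fc]
  | succ n ih =>
    intro h
    have hn : res x n = res y n := by
      have := congrArg (List.take n) h
      rwa [take_res (Nat.le_succ n), take_res (Nat.le_succ n)] at this
    have hcyl : cylS x n = cylS y n := by
      ext z; simp [cylS, hn]
    have hcond : (cylS x n ⊆ V (Fc V n x)) ↔ (cylS y n ⊆ V (Fc V n y)) := by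
      rw [hcyl, ih hn]
    rw [Fc_succ, Fc_succ]
    unfold Pc
    by_cases hc : cylS x n ⊆ V (Fc V n x)
    · rw [if_pos hc, if_pos (hcond.mp hc), ih hn]
    · rw [if_neg hc, if_neg (fun hh => hc (hcond.mpr hh)), ih hn]

lemma Pc_congr (V : ℕ → Set (ℕ → Bool)) {x y : ℕ → Bool} {n : ℕ} (h : res x n = res y n) :
    Pc V n x ↔ Pc V n y := by
  unfold Pc
  rw [Fc_congr V n h, show cylS x n = cylS y n by ext z; simp [cylS, h]]

lemma Fc_mono (V : ℕ → Set (ℕ → Bool)) (x : ℕ → Bool) : Monotone fun n => Fc V n x := by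
  apply monotone_nat_of_le_succ
  intro n
  rw [Fc_succ]
  exact Nat.le_add_right _ _

lemma Fc_succ_of_Pc {V : ℕ → Set (ℕ → Bool)} {n : ℕ} {x : ℕ → Bool} (h : Pc V n x) :
    Fc V (n + 1) x = Fc V n x + 1 := by
  rw [Fc_succ, if_pos h]

lemma Fc_const_of_not_Pc {V : ℕ → Set (ℕ → Bool)} {N : ℕ} {x : ℕ → Bool}
    (h : ∀ m, N ≤ m → ¬ Pc V m x) : ∀ m, N ≤ m → Fc V m x = Fc V N x := by
  intro m hm
  induction m with
  | zero => rw [Nat.le_zero.mp hm]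
  | succ m ih =>
    rcases Nat.lt_or_ge N (m + 1) with hlt | hge
    · have hNm : N ≤ m := Nat.lt_succ_iff.mp hlt
      rw [Fc_succ, if_neg (h m hNm), Nat.add_zero, ih hNm]
    · have : N = m + 1 := le_antisymm hm hge
      rw [this]

/-- If there are infinitely many entry times, then the count is unbounded along entry times. -/
lemma Fc_unbounded {V : ℕ → Set (ℕ → Bool)} {x : ℕ → Bool}
    (h : {m | Pc V m x}.Infinite) : ∀ k, ∃ m, Pc V m x ∧ k ≤ Fc V m x := by
  intro k
  induction k with
  | zero =>
    rcases h.exists_gt 0 with ⟨m, hm, _⟩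
    exact ⟨m, hm, Nat.zero_le _⟩
  | succ k ih =>
    rcases ih with ⟨m, hPm, hk⟩
    rcases h.exists_gt m with ⟨m', hPm', hmm'⟩
    refine ⟨m', hPm', ?_⟩
    have h1 : Fc V (m + 1) x = Fc V m x + 1 := Fc_succ_of_Pc hPm
    have h2 : Fc V (m + 1) x ≤ Fc V m' x := Fc_mono V x hmm'
    omega

/-- The key equivalence: for an antitone sequence of open sets, membership in the
intersection is equivalent to having infinitely many entry times. -/
lemma Pc_infinite_iff {V : ℕ → Set (ℕ → Bool)} (hV : ∀ n, IsOpen (V n))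
    (hanti : ∀ m n, m ≤ n → V n ⊆ V m) (x : ℕ → Bool) :
    {m | Pc V m x}.Infinite ↔ ∀ k, x ∈ V k := by
  constructor
  · intro h k
    rcases Fc_unbounded h k with ⟨m, hPm, hk⟩
    exact hanti k _ hk (hPm (by simp [cylS]))
  · intro h
    by_contra hfin
    rw [Set.not_infinite] at hfin
    rcases hfin.bddAbove with ⟨N, hN⟩
    have hnot : ∀ m, N + 1 ≤ m → ¬ Pc V m x := by
      intro m hm hPm
      have := hN hPm
      omega
    set c := Fc V (N + 1) x with hc
    rcases exists_cylS_subset (hV c) (h c) with ⟨n, hn⟩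
    set m := max n (N + 1) with hm
    have h1 : Fc V m x = c := Fc_const_of_not_Pc hnot m (le_max_right _ _)
    have h2 : cylS x m ⊆ V c := (cylS_antitone (le_max_left n (N + 1))).trans hn
    exact hnot m (le_max_right _ _) (by rw [Pc, h1]; exact h2)

/-- The set W associated to an antitone sequence V. -/
def WofV (V : ℕ → Set (ℕ → Bool)) : Set (List Bool) :=
  {s | ∀ x, res x s.length = s → Pc V s.length x}

lemma res_mem_WofV_iff (V : ℕ → Set (ℕ → Bool)) (x : ℕ → Bool) (m : ℕ) :
    res x m ∈ WofV V ↔ Pc V m x := by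
  constructor
  · intro h
    have := h x (by rw [length_res])
    rwa [length_res] at this
  · intro h y hy
    rw [length_res] at hy ⊢
    exact (Pc_congr V hy.symm).mp h

theorem stmt4 (X : Set (ℕ → Bool)) :
    (∀ Y, IsRelGdelta X Y → IsRelFsigma X Y) ↔
      (∀ W : Set (List Bool), IsRelFsigma X {x ∈ X | {m | res x m ∈ W}.Infinite}) := by
  constructor
  · -- forward: the "infinitely often" set is a relative G_δ
    intro hσ W
    apply hσ
    refine ⟨fun n => {x | ∃ m, n ≤ m ∧ res x m ∈ W}, ?_, ?_⟩
    · intro n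
      show IsOpen {x : ℕ → Bool | ∃ m, n ≤ m ∧ res x m ∈ W}
      have : {x : ℕ → Bool | ∃ m, n ≤ m ∧ res x m ∈ W}
          = ⋃ m, ⋃ (_ : n ≤ m), {x | res x m ∈ W} := by
        ext x; simp
      rw [this]
      exact isOpen_iUnion fun m => isOpen_iUnion fun _ => isOpen_res_mem W m
    · ext x
      simp only [Set.mem_setOf_eq, Set.mem_inter_iff, Set.mem_iInter]
      constructor
      · rintro ⟨hx, hinf⟩
        refine ⟨hx, fun n => ?_⟩
        rcases hinf.exists_gt n with ⟨m, hm, hnm⟩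
        exact ⟨m, le_of_lt hnm, hm⟩
      · rintro ⟨hx, h⟩
        refine ⟨hx, Set.infinite_of_forall_exists_gt fun n => ?_⟩
        rcases h (n + 1) with ⟨m, hnm, hm⟩
        exact ⟨m, hm, by omega⟩
  · -- backward: encode a G_δ via entry times
    intro hQ Y hY
    rcases hY with ⟨U, hU, hYeq⟩
    set V : ℕ → Set (ℕ → Bool) := fun k => ⋂ j ∈ Finset.range (k + 1), U j with hVdef
    have hVopen : ∀ k, IsOpen (V k) :=
      fun k => isOpen_biInter_finset fun j _ => hU j
    have hVanti : ∀ m n, m ≤ n → V n ⊆ V m := by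
      intro m n hmn x hx
      simp only [hVdef, Set.mem_iInter, Finset.mem_range] at hx ⊢
      intro j hj
      exact hx j (by omega)
    have hViInter : (⋂ k, V k) = ⋂ n, U n := by
      apply Set.Subset.antisymm
      · intro x hx
        simp only [Set.mem_iInter] at hx ⊢
        intro n
        have := hx n
        simp only [hVdef, Set.mem_iInter, Finset.mem_range] at this
        exact this n (by omega)
      · intro x hx
        simp only [Set.mem_iInter, hVdef, Finset.mem_range] at hx ⊢
        intro k j _
        exact hx j
    rcases hQ (WofV V) with ⟨C, hC, hCeq⟩
    refine ⟨C, hC, ?_⟩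
    rw [← hCeq, hYeq]
    ext x
    simp only [Set.mem_inter_iff, Set.mem_setOf_eq]
    constructor
    · rintro ⟨hx, hmem⟩
      refine ⟨hx, ?_⟩
      have : {m | Pc V m x}.Infinite := by
        rw [Pc_infinite_iff hVopen hVanti]
        intro k
        rw [← hViInter] at hmem
        exact Set.mem_iInter.mp hmem k
      apply this.mono
      intro m hm
      exact (res_mem_WofV_iff V x m).mpr hm
    · rintro ⟨hx, hinf⟩
      refine ⟨hx, ?_⟩
      rw [← hViInter]
      rw [Set.mem_iInter]
      rw [← Pc_infinite_iff hVopen hVanti]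
      apply hinf.mono
      intro m hm
      exact (res_mem_WofV_iff V x m).mp hm
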